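/- Let B ∈ ℂ, c ∈ ℝ≥0 with c = |B−1| ≠ 0. Then the three coefficients 1−|B|²−c²+2c·Re B, 4c·Im B, and 1−|B|²−c²−2c·Re B all vanish simultaneously if and only if B = 0 (and then c = 1). -/

import Mathlib

/-- Proposition 2.18(i) (coefficient computation): for `c = |B-1| ≠ 0`, the
three coefficients of the quadratic form (15) vanish simultaneously iff
`B = 0` (and then `c = 1`). -/
theorem stmt16 (B : ℂ) (c : ℝ) (hc : 0 ≤ c)
    (hcB : c = ‖B - 1‖) (hc0 : c ≠ 0) :
    (1 - ‖B‖ ^ 2 - c ^ 2 + 2 * c * B.re = 0 ∧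
      4 * c * B.im = 0 ∧
      1 - ‖B‖ ^ 2 - c ^ 2 - 2 * c * B.re = 0) ↔
    (B = 0 ∧ c = 1) := by
  have habs : ‖B‖ ^ 2 = B.re ^ 2 + B.im ^ 2 := by
    rw [Complex.sq_norm, Complex.normSq_apply]; ring
  have hc2 : c ^ 2 = (B.re - 1) ^ 2 + B.im ^ 2 := by
    rw [hcB, Complex.sq_norm, Complex.normSq_apply]
    simp [Complex.sub_re, Complex.sub_im]; ring
  constructor
  · rintro ⟨h1, h2, h3⟩
    have him : B.im = 0 := by
      rcases mul_eq_zero.1 h2 with h | h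
      · rcases mul_eq_zero.1 h with h' | h'
        · norm_num at h'
        · exact absurd h' hc0
      · exact h
    have hre : c * B.re = 0 := by linarith
    have hre0 : B.re = 0 := by
      rcases mul_eq_zero.1 hre with h | h
      · exact absurd h hc0
      · exact h
    have hB : B = 0 := Complex.ext hre0 him
    have : c ^ 2 = 1 := by rw [hc2, hre0, him]; ring
    have hc1 : c = 1 := by nlinarith
    exact ⟨hB, hc1⟩
  · rintro ⟨hB, hc1⟩
    subst hB hc1
    simp
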